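/- Maurer's tail bound: Let X_1,...,X_T be i.i.d. non-negative real-valued random variables distributed as X with E[X], E[X²] < ∞. Then for any τ > 0, Pr{ (1/T) Σ_{t=1}^T X_t < E[X] − τ } ≤ exp( −T τ² / (2 E[X²]) ). -/

import Mathlib

open MeasureTheory ProbabilityTheory

lemma exp_neg_le_quad {x : ℝ} (hx : 0 ≤ x) : Real.exp (-x) ≤ 1 - x + x ^ 2 / 2 := by
  have hd : ∀ y : ℝ, HasDerivAt (fun y : ℝ => 1 - y + y ^ 2 / 2 - Real.exp (-y))
      (-1 + y - (-Real.exp (-y))) y := by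
    intro y
    have h1 : HasDerivAt (fun y : ℝ => 1 - y + y ^ 2 / 2) (-1 + y) y := by
      have := ((hasDerivAt_const y (1:ℝ)).sub (hasDerivAt_id y)).add
        (((hasDerivAt_pow 2 y)).div_const 2)
      simpa [Pi.add_def, Pi.sub_def] using this
    have h2 : HasDerivAt (fun y : ℝ => Real.exp (-y)) (-Real.exp (-y)) y := by
      simpa [Function.comp_def] using (Real.hasDerivAt_exp (-y)).comp y ((hasDerivAt_id y).neg)
    exact h1.sub h2
  have key : MonotoneOn (fun y : ℝ => 1 - y + y ^ 2 / 2 - Real.exp (-y)) (Set.Ici 0) := by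
    apply monotoneOn_of_deriv_nonneg (convex_Ici 0)
    · exact fun y _ => ((hd y).differentiableAt).continuousAt.continuousWithinAt
    · exact fun y _ => ((hd y).differentiableAt).differentiableWithinAt
    · intro y hy
      rw [(hd y).deriv]
      rw [interior_Ici] at hy
      have hy0 : 0 ≤ y := le_of_lt hy
      have := Real.add_one_le_exp (-y)
      nlinarith [this]
  have h0 : (fun y : ℝ => 1 - y + y ^ 2 / 2 - Real.exp (-y)) 0 ≤
      (fun y : ℝ => 1 - y + y ^ 2 / 2 - Real.exp (-y)) x :=
    key (Set.self_mem_Ici) (Set.mem_Ici.2 hx) hx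
  norm_num at h0
  linarith [h0]

set_option maxHeartbeats 1000000
/-- Maurer's tail bound: for i.i.d. non-negative real random variables
`X_1, …, X_T` with finite first and second moments, and any `τ > 0`,
`Pr{(1/T)Σ X_t < E[X] − τ} ≤ exp(−Tτ²/(2E[X²]))`. -/
theorem stmt6 {Ω : Type*} [MeasurableSpace Ω] (P : Measure Ω) [IsProbabilityMeasure P]
    (T : ℕ) (hT : 0 < T)
    (X : Fin T → Ω → ℝ)
    (hmeas : ∀ t, Measurable (X t))
    (hnn : ∀ t ω, 0 ≤ X t ω)
    (hindep : iIndepFun X P)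
    (hident : ∀ s t, IdentDistrib (X s) (X t) P P)
    (hint1 : ∀ t, Integrable (X t) P)
    (hint2 : ∀ t, Integrable (fun ω => (X t ω) ^ 2) P)
    (τ : ℝ) (hτ : 0 < τ) :
    P {ω | (1 / T : ℝ) * ∑ t, X t ω < (∫ ω, X ⟨0, hT⟩ ω ∂P) - τ}
      ≤ ENNReal.ofReal
          (Real.exp (-(T * τ ^ 2) / (2 * ∫ ω, (X ⟨0, hT⟩ ω) ^ 2 ∂P))) := by
  set x0 : Fin T := ⟨0, hT⟩
  set μ1 : ℝ := ∫ ω, X x0 ω ∂P with hμ1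
  set m2 : ℝ := ∫ ω, (X x0 ω) ^ 2 ∂P with hm2
  by_cases hcase : μ1 ≤ τ
  · -- event is empty since the empirical mean is nonnegative
    have hempty : {ω | (1 / T : ℝ) * ∑ t, X t ω < μ1 - τ} = ∅ := by
      ext ω
      simp only [Set.mem_setOf_eq, Set.mem_empty_iff_false, iff_false, not_lt]
      have h1 : (0:ℝ) ≤ (1 / T : ℝ) * ∑ t, X t ω :=
        mul_nonneg (by positivity) (Finset.sum_nonneg fun t _ => hnn t ω)
      linarith
    rw [hempty]
    simp
  push_neg at hcase
  have hμpos : 0 < μ1 := hτ.trans hcase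
  -- m2 > 0
  have hm2nn : 0 ≤ m2 := integral_nonneg fun ω => sq_nonneg _
  have hm2pos : 0 < m2 := by
    rcases hm2nn.lt_or_eq with h | h
    · exact h
    · exfalso
      have hX0 : X x0 =ᵐ[P] 0 := by
        have := (integral_eq_zero_iff_of_nonneg (fun ω => sq_nonneg (X x0 ω)) (hint2 x0)).mp h.symm
        filter_upwards [this] with ω hω
        have : (X x0 ω) ^ 2 = 0 := hω
        simpa using pow_eq_zero_iff (n := 2) (by norm_num) |>.mp this
      have : μ1 = 0 := by
        rw [hμ1]
        rw [integral_congr_ae hX0]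
        simp
      linarith
  set β : ℝ := τ / m2 with hβ
  have hβpos : 0 < β := div_pos hτ hm2pos
  clear_value x0 μ1 m2 β
  -- integrability of exp(-β * X t)
  have hintexp : ∀ t : Fin T, Integrable (fun ω => Real.exp (-β * X t ω)) P := by
    intro t
    refine (integrable_const (1:ℝ)).mono' ?_ ?_
    · exact (((hmeas t).const_mul (-β)).exp).aestronglyMeasurable
    · filter_upwards with ω
      rw [Real.norm_eq_abs, abs_of_pos (Real.exp_pos _)]
      exact Real.exp_le_one_iff.mpr (mul_nonpos_of_nonpos_of_nonneg (by linarith) (hnn t ω))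
  -- integrability of exp(-β * S)
  have hintexpS : Integrable (fun ω => Real.exp (-β * (∑ t, X t) ω)) P := by
    simp only [Finset.sum_apply]
    refine (integrable_const (1:ℝ)).mono' ?_ ?_
    · exact (((Finset.measurable_sum Finset.univ fun t _ => hmeas t).const_mul (-β)).exp).aestronglyMeasurable
    · filter_upwards with ω
      rw [Real.norm_eq_abs, abs_of_pos (Real.exp_pos _)]
      refine Real.exp_le_one_iff.mpr (mul_nonpos_of_nonpos_of_nonneg (by linarith) ?_)
      exact Finset.sum_nonneg fun t _ => hnn t ω
  -- mgf bound for each coordinate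
  have hmgf0 : mgf (X x0) P (-β) ≤ Real.exp (-β * μ1 + β ^ 2 * m2 / 2) := by
    have step1 : mgf (X x0) P (-β) ≤ 1 - β * μ1 + β ^ 2 * m2 / 2 := by
      have hle : ∀ ω, Real.exp (-β * X x0 ω) ≤
          1 - β * X x0 ω + β ^ 2 * (X x0 ω) ^ 2 / 2 := by
        intro ω
        have := exp_neg_le_quad (mul_nonneg hβpos.le (hnn x0 ω))
        calc Real.exp (-β * X x0 ω) = Real.exp (-(β * X x0 ω)) := by ring_nf
          _ ≤ 1 - β * X x0 ω + (β * X x0 ω) ^ 2 / 2 := this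
          _ = 1 - β * X x0 ω + β ^ 2 * (X x0 ω) ^ 2 / 2 := by ring
      have hI1 : Integrable (fun ω => 1 - β * X x0 ω) P := by
        simpa [Pi.sub_def] using (integrable_const (1:ℝ)).sub ((hint1 x0).const_mul β)
      have hI2 : Integrable (fun ω => β ^ 2 * (X x0 ω) ^ 2 / 2) P := by
        simpa using ((hint2 x0).const_mul (β ^ 2)).div_const 2
      have hIβ : Integrable (fun ω => β * X x0 ω) P := (hint1 x0).const_mul β
      have := integral_mono (hintexp x0) (hI1.add hI2) hle
      calc mgf (X x0) P (-β) = ∫ ω, Real.exp (-β * X x0 ω) ∂P := rfl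
        _ ≤ ∫ ω, (1 - β * X x0 ω + β ^ 2 * (X x0 ω) ^ 2 / 2) ∂P := this
        _ = 1 - β * μ1 + β ^ 2 * m2 / 2 := by
            rw [integral_add hI1 hI2,
              integral_sub (integrable_const (1:ℝ)) hIβ,
              integral_div, integral_const_mul, integral_const_mul]
            simp [hμ1, hm2]
    refine step1.trans ?_
    have := Real.add_one_le_exp (-β * μ1 + β ^ 2 * m2 / 2)
    linarith
  have hmgft : ∀ t : Fin T, mgf (X t) P (-β) = mgf (X x0) P (-β) := by
    intro t
    have h := (hident t x0).comp (u := fun x => Real.exp (-β * x))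
      (Real.measurable_exp.comp (measurable_id.const_mul (-β)))
    exact h.integral_eq
  -- Chernoff bound on the sum
  have hsub : {ω | (1 / T : ℝ) * ∑ t, X t ω < μ1 - τ} ⊆
      {ω | (∑ t, X t) ω ≤ (T : ℝ) * (μ1 - τ)} := by
    intro ω hω
    simp only [Set.mem_setOf_eq] at hω ⊢
    have hTpos : (0:ℝ) < T := by exact_mod_cast hT
    have h2 : (∑ t, X t ω) < (T:ℝ) * (μ1 - τ) := by
      have h3 := (mul_lt_mul_iff_right₀ hTpos).2 hω
      rw [← mul_assoc, mul_one_div, div_self (ne_of_gt hTpos), one_mul] at h3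
      exact h3
    simp only [Finset.sum_apply]
    linarith
  have hchern := measure_le_le_exp_mul_mgf (X := ∑ t, X t) (μ := P)
    ((T : ℝ) * (μ1 - τ)) (neg_nonpos.mpr hβpos.le) hintexpS
  have hmgfsum : mgf (∑ t, X t) P (-β) = ∏ t : Fin T, mgf (X t) P (-β) :=
    hindep.mgf_sum hmeas Finset.univ
  have hprod : ∏ t : Fin T, mgf (X t) P (-β) ≤
      Real.exp ((T : ℝ) * (-β * μ1 + β ^ 2 * m2 / 2)) := by
    calc ∏ t : Fin T, mgf (X t) P (-β)
        = (mgf (X x0) P (-β)) ^ T := by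
          rw [Finset.prod_congr rfl fun t _ => hmgft t]
          simp
      _ ≤ (Real.exp (-β * μ1 + β ^ 2 * m2 / 2)) ^ T := by
          exact pow_le_pow_left₀ mgf_nonneg hmgf0 T
      _ = Real.exp ((T : ℝ) * (-β * μ1 + β ^ 2 * m2 / 2)) := by
          rw [← Real.exp_nat_mul]
  -- combine
  have hfinal : (P {ω | (∑ t, X t) ω ≤ (T : ℝ) * (μ1 - τ)}).toReal ≤
      Real.exp (-(T * τ ^ 2) / (2 * m2)) := by
    refine hchern.trans ?_
    rw [hmgfsum]
    calc Real.exp (-(-β) * ((T : ℝ) * (μ1 - τ))) * ∏ t : Fin T, mgf (X t) P (-β)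
        ≤ Real.exp (β * ((T : ℝ) * (μ1 - τ))) *
            Real.exp ((T : ℝ) * (-β * μ1 + β ^ 2 * m2 / 2)) := by
          rw [neg_neg]
          exact mul_le_mul_of_nonneg_left hprod (Real.exp_pos _).le
      _ = Real.exp (β * ((T : ℝ) * (μ1 - τ)) + (T : ℝ) * (-β * μ1 + β ^ 2 * m2 / 2)) := by
          rw [← Real.exp_add]
      _ = Real.exp (-(T * τ ^ 2) / (2 * m2)) := by
          congr 1
          rw [hβ]
          field_simp [hβ]
          ring
  calc P {ω | (1 / T : ℝ) * ∑ t, X t ω < μ1 - τ}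
      ≤ P {ω | (∑ t, X t) ω ≤ (T : ℝ) * (μ1 - τ)} := measure_mono hsub
    _ ≤ ENNReal.ofReal (Real.exp (-(T * τ ^ 2) / (2 * m2))) := by
        rw [ENNReal.le_ofReal_iff_toReal_le (measure_ne_top _ _) (Real.exp_pos _).le]
        exact hfinal
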